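/- Let Ω > 0, T > 0 with T < π/Ω, ρ > 0, and let K, K' be positive integers with K ≥ ρ/T and K' ≥ (π ρ T^{−1} + (K+1) Ω T)/(π − Ω T). Set N = K + K', ω₀ = 2π/((N+1)T), and N_Ω = ⌈Ω/ω₀⌉ = ⌈Ω (K+K'+1) T/(2π)⌉. Then (K' − 2(N_Ω − 1))·T ≥ ρ. -/

import Mathlib

open Real

/-- **Sampling-range estimate.**
Under the sampling conditions `T < π/Ω`, `K ≥ ρ/T` and
`K' ≥ (πρT⁻¹ + (K+1)ΩT)/(π − ΩT)`, with `N_Ω = ⌈Ω(K+K'+1)T/(2π)⌉`, one has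
`(K' − 2(N_Ω − 1))·T ≥ ρ`. -/
theorem sampling_range_estimate
    (Ω T ρ : ℝ) (K K' : ℕ)
    (hΩ : 0 < Ω) (hT : 0 < T) (hTΩ : T < π / Ω) (hρ : 0 < ρ)
    (hK : 0 < K) (hK' : 0 < K')
    (hKρ : ρ / T ≤ (K : ℝ))
    (hK'cond : (π * ρ * T⁻¹ + ((K : ℝ) + 1) * Ω * T) / (π - Ω * T) ≤ (K' : ℝ)) :
    ((K' : ℝ) - 2 * ((⌈Ω * ((K : ℝ) + (K' : ℝ) + 1) * T / (2 * π)⌉ : ℤ) - 1)) * T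
      ≥ ρ := by
  have hπ : 0 < π := pi_pos
  have hΩT : Ω * T < π := by
    have := (lt_div_iff₀ hΩ).mp hTΩ
    linarith [this]
  have hden : 0 < π - Ω * T := by linarith
  have h1 : π * ρ * T⁻¹ + ((K : ℝ) + 1) * Ω * T ≤ (K' : ℝ) * (π - Ω * T) :=
    (div_le_iff₀ hden).mp hK'cond
  set x : ℝ := Ω * ((K : ℝ) + (K' : ℝ) + 1) * T / (2 * π) with hx
  have hc : (⌈x⌉ : ℝ) < x + 1 := Int.ceil_lt_add_one x
  have hinv : T * T⁻¹ = 1 := mul_inv_cancel₀ (ne_of_gt hT)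
  have hxval : x * (2 * π) = Ω * ((K : ℝ) + (K' : ℝ) + 1) * T := by
    rw [hx]; field_simp
  have hc' : (⌈x⌉ : ℝ) - 1 < x := by linarith
  have P2 : ((⌈x⌉ : ℝ) - 1) * (2 * T * π) < x * (2 * T * π) :=
    mul_lt_mul_of_pos_right hc' (by positivity)
  have P3 : x * (2 * T * π) = Ω * ((K : ℝ) + (K' : ℝ) + 1) * T * T := by
    rw [hx]; field_simp
  have P1 : (π * ρ * T⁻¹ + ((K : ℝ) + 1) * Ω * T) * T ≤ (K' : ℝ) * (π - Ω * T) * T :=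
    mul_le_mul_of_nonneg_right h1 hT.le
  have hρπ : π * ρ * T⁻¹ * T = π * ρ := by
    field_simp
  rw [ge_iff_le, ← mul_le_mul_iff_of_pos_right hπ]
  push_cast
  nlinarith [P1, P2, P3, hρπ]
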